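/- Let s be a nonempty compact convex subset of ℝⁿ (EuclideanSpace ℝ (Fin n)), let f : ℝⁿ → ℝ be convex on s and Lipschitz on s, and let ε > 0. Then there exist k ≥ 1, affine functions p₁, …, p_k : ℝⁿ → ℝ and an affine function q : ℝⁿ → ℝ such that, defining z₀(x) = 0 and z_i(x) = max(0, z_{i-1}(x) + p_i(x)) for 1 ≤ i ≤ k, one has |f x - (z_k(x) + q(x))| ≤ ε for every x ∈ s. -/

import Mathlib

set_option linter.unusedSectionVars false
set_option linter.unusedVariables false

section Aux

variable {E : Type*} [NormedAddCommGroup E] [NormedSpace ℝ E]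

/-- The epigraph of a function continuous on a closed set is closed. -/
lemma epi_closed_aux {s : Set E} (hs : IsClosed s) {f : E → ℝ} (hf : ContinuousOn f s) :
    IsClosed {p : E × ℝ | p.1 ∈ s ∧ f p.1 ≤ p.2} := by
  apply IsSeqClosed.isClosed
  intro u p hu hup
  have hfst : Filter.Tendsto (fun k => (u k).1) Filter.atTop (nhds p.1) :=
    (continuous_fst.tendsto p).comp hup
  have hsnd : Filter.Tendsto (fun k => (u k).2) Filter.atTop (nhds p.2) :=
    (continuous_snd.tendsto p).comp hup
  have h1 : ∀ k, (u k).1 ∈ s := fun k => (hu k).1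
  have hp1 : p.1 ∈ s := hs.mem_of_tendsto hfst (Filter.Eventually.of_forall h1)
  refine ⟨hp1, ?_⟩
  have hfin : Filter.Tendsto (fun k => f (u k).1) Filter.atTop (nhds (f p.1)) := by
    have : Filter.Tendsto (fun k => (u k).1) Filter.atTop (nhdsWithin p.1 s) :=
      tendsto_nhdsWithin_iff.mpr ⟨hfst, Filter.Eventually.of_forall h1⟩
    exact (hf p.1 hp1).tendsto.comp this
  exact le_of_tendsto_of_tendsto' hfin hsnd (fun k => (hu k).2)

/-- Near-supporting affine minorant at a point, together with a neighborhood
on which it is ε-close to f. -/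
lemma exists_near_support_aux {s : Set E} (hs_cpt : IsCompact s) (hs_cvx : Convex ℝ s)
    {f : E → ℝ} (hf_cvx : ConvexOn ℝ s f) (hf_cont : ContinuousOn f s)
    {ε : ℝ} (hε : 0 < ε) {y : E} (hy : y ∈ s) :
    ∃ (a : E →ᵃ[ℝ] ℝ) (W : Set E), IsOpen W ∧ y ∈ W ∧
      (∀ x ∈ s, a x ≤ f x) ∧ ∀ x ∈ W ∩ s, f x - ε ≤ a x := by
  set Epi : Set (E × ℝ) := {p : E × ℝ | p.1 ∈ s ∧ f p.1 ≤ p.2} with hEpi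
  have hconv : Convex ℝ Epi := hf_cvx.convex_epigraph
  have hclosed : IsClosed Epi := epi_closed_aux hs_cpt.isClosed hf_cont
  have hnot : ((y, f y - ε / 2) : E × ℝ) ∉ Epi := by
    intro h
    have := h.2
    simp only at this
    linarith
  obtain ⟨ℓ, u, hlt, hgt⟩ := geometric_hahn_banach_point_closed hconv hclosed hnot
  set β : ℝ := ℓ (0, 1) with hβ
  have hdec : ∀ (x : E) (t : ℝ), ℓ (x, t) = ℓ (x, 0) + t * β := by
    intro x t
    have h1 : (x, t) = (x, (0:ℝ)) + t • ((0:E), (1:ℝ)) := by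
      simp [Prod.ext_iff]
    rw [h1, map_add, map_smul]
    ring_nf
    rw [hβ]; ring
  have hyEpi : ((y, f y) : E × ℝ) ∈ Epi := ⟨hy, le_refl _⟩
  have hβpos : 0 < β := by
    have h1 := hgt _ hyEpi
    rw [hdec] at h1 hlt
    nlinarith
  set a : E →ᵃ[ℝ] ℝ := AffineMap.const ℝ E (β⁻¹ * u) -
      β⁻¹ • (ℓ.comp (ContinuousLinearMap.inl ℝ E ℝ)).toLinearMap.toAffineMap with ha
  have ha_eval : ∀ x : E, a x = β⁻¹ * (u - ℓ (x, 0)) := by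
    intro x
    simp [ha, AffineMap.coe_sub, AffineMap.coe_smul]
    ring
  have hmin : ∀ x ∈ s, a x ≤ f x := by
    intro x hx
    have h1 := hgt _ (⟨hx, le_refl _⟩ : ((x, f x) : E × ℝ) ∈ Epi)
    rw [hdec] at h1
    rw [ha_eval]
    rw [mul_comm, ← div_eq_mul_inv, div_le_iff₀ hβpos]
    nlinarith
  have hney : f y - ε < a y := by
    rw [hdec] at hlt
    rw [ha_eval, mul_comm, ← div_eq_mul_inv, lt_div_iff₀ hβpos]
    nlinarith
  have hacont : Continuous fun x => a x := by
    have : (fun x => a x) = fun x => β⁻¹ * (u - ℓ (x, 0)) := funext ha_eval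
    rw [this]
    fun_prop
  have hmem : {x | f x - a x < ε} ∈ nhdsWithin y s := by
    have hc : ContinuousWithinAt (fun x => f x - a x) s y :=
      (hf_cont y hy).sub hacont.continuousWithinAt
    have : f y - a y < ε := by linarith
    exact hc (Iio_mem_nhds this)
  obtain ⟨W, hWopen, hyW, hWsub⟩ := mem_nhdsWithin.mp hmem
  refine ⟨a, W, hWopen, hyW, hmin, ?_⟩
  intro x hx
  have := hWsub ⟨hx.1, hx.2⟩
  simp only [Set.mem_setOf_eq] at this
  linarith

lemma max_zero_sub_aux (S c : ℝ) : max 0 (S - c) = max S c - c := by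
  rcases le_total S c with h | h
  · rw [max_eq_left (by linarith), max_eq_right h]; ring
  · rw [max_eq_right (by linarith), max_eq_left h]

end Aux

/-- The ICNN recursion with one ReLU neuron per layer, unit hidden weight and affine
pass-through connections: `z₀(x) = 0` and `z_i(x) = max 0 (z_{i-1}(x) + p_i(x))` for `i ≥ 1`. -/
noncomputable def icnnSeq (n : ℕ) (p : ℕ → EuclideanSpace ℝ (Fin n) →ᵃ[ℝ] ℝ) :
    ℕ → EuclideanSpace ℝ (Fin n) → ℝ
  | 0 => fun _ => 0
  | (i + 1) => fun x => max 0 (icnnSeq n p i x + p (i + 1) x)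

lemma icnn_eq_sup_aux (n : ℕ) (a : ℕ → (EuclideanSpace ℝ (Fin n) →ᵃ[ℝ] ℝ)) (ha : a 0 = a 1) :
    ∀ i, ∀ (hi : 1 ≤ i), ∀ x, icnnSeq n (fun j => a (j-1) - a j) i x
      = (Finset.Icc 1 i).sup' (Finset.nonempty_Icc.mpr hi) (fun j => a j x) - a i x := by
  intro i
  induction i with
  | zero => omega
  | succ i ih =>
    intro hi x
    rcases Nat.eq_or_lt_of_le hi with h1 | h1
    · have hi0 : i = 0 := by omega
      subst hi0
      simp [icnnSeq, ha, AffineMap.coe_sub]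
    · have hi1 : 1 ≤ i := by omega
      have hins : Finset.Icc 1 (i+1) = insert (i+1) (Finset.Icc 1 i) :=
        (Finset.insert_Icc_right_eq_Icc_add_one (by omega)).symm
      have hsup : (Finset.Icc 1 (i+1)).sup' (Finset.nonempty_Icc.mpr hi) (fun j => a j x)
          = max (a (i+1) x) ((Finset.Icc 1 i).sup' (Finset.nonempty_Icc.mpr hi1) (fun j => a j x)) := by
        simp only [hins]
        rw [Finset.sup'_insert (Finset.nonempty_Icc.mpr hi1)]
      show max 0 (icnnSeq n (fun j => a (j-1) - a j) i x + (a ((i+1)-1) - a (i+1)) x) = _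
      rw [ih hi1 x, hsup]
      have hidx : (i+1) - 1 = i := by omega
      have hsub : (a i - a (i+1)) x = a i x - a (i+1) x := by
        simp [AffineMap.coe_sub]
      rw [hidx, hsub]
      rw [show (Finset.Icc 1 i).sup' (Finset.nonempty_Icc.mpr hi1) (fun j => a j x) - a i x
            + (a i x - a (i+1) x)
          = (Finset.Icc 1 i).sup' (Finset.nonempty_Icc.mpr hi1) (fun j => a j x) - a (i+1) x by ring]
      rw [max_zero_sub_aux, max_comm]

theorem icnn_approximates_lipschitz_convex
    (n : ℕ) (s : Set (EuclideanSpace ℝ (Fin n)))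
    (hs_ne : s.Nonempty) (hs_cpt : IsCompact s) (hs_cvx : Convex ℝ s)
    (f : EuclideanSpace ℝ (Fin n) → ℝ)
    (hf_cvx : ConvexOn ℝ s f) (hf_lip : ∃ K : NNReal, LipschitzOnWith K f s)
    (ε : ℝ) (hε : 0 < ε) :
    ∃ (k : ℕ), 1 ≤ k ∧
      ∃ (p : ℕ → EuclideanSpace ℝ (Fin n) →ᵃ[ℝ] ℝ) (q : EuclideanSpace ℝ (Fin n) →ᵃ[ℝ] ℝ),
        ∀ x ∈ s, |f x - (icnnSeq n p k x + q x)| ≤ ε := by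
  classical
  obtain ⟨K, hK⟩ := hf_lip
  have hf_cont : ContinuousOn f s := hK.continuousOn
  have H : ∀ (y : EuclideanSpace ℝ (Fin n)) (hy : y ∈ s), ∃ (a : EuclideanSpace ℝ (Fin n) →ᵃ[ℝ] ℝ) (W : Set (EuclideanSpace ℝ (Fin n))), IsOpen W ∧ y ∈ W ∧
      (∀ x ∈ s, a x ≤ f x) ∧ ∀ x ∈ W ∩ s, f x - ε ≤ a x :=
    fun y hy => exists_near_support_aux hs_cpt hs_cvx hf_cvx hf_cont hε hy
  choose A W hWopen hyW hmin hnear using H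
  obtain ⟨t, ht⟩ := hs_cpt.elim_nhds_subcover' (fun y hy => W y hy)
    (fun y hy => (hWopen y hy).mem_nhds (hyW y hy))
  -- the finite list of net points
  set L : List s := t.toList with hL
  set k : ℕ := L.length with hk
  have htne : t.Nonempty := by
    obtain ⟨x0, hx0⟩ := hs_ne
    have := ht hx0
    simp only [Set.mem_iUnion] at this
    obtain ⟨z, hz, _⟩ := this
    exact ⟨z, hz⟩
  have hk1 : 1 ≤ k := by
    rw [hk, hL, Finset.length_toList]
    exact Finset.card_pos.mpr htne
  set d : s := ⟨hs_ne.choose, hs_ne.choose_spec⟩ with hd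
  set yf : ℕ → s := fun j => L.getD j d with hyf
  set a : ℕ → (EuclideanSpace ℝ (Fin n) →ᵃ[ℝ] ℝ) := fun j => A (yf (j-1)) (yf (j-1)).2 with haa
  refine ⟨k, hk1, fun j => a (j-1) - a j, a k, ?_⟩
  intro x hx
  have ha01 : a 0 = a 1 := rfl
  have hicnn := icnn_eq_sup_aux n a ha01 k hk1 x
  rw [hicnn]
  set S : ℝ := (Finset.Icc 1 k).sup' (Finset.nonempty_Icc.mpr hk1) (fun j => a j x) with hS
  have heq : S - a k x + a k x = S := by ring
  rw [heq]
  -- upper bound : S ≤ f x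
  have hub : S ≤ f x := by
    apply Finset.sup'_le
    intro j hj
    exact hmin (yf (j-1)) (yf (j-1)).2 x hx
  -- lower bound : f x - ε ≤ S
  have hlb : f x - ε ≤ S := by
    have := ht hx
    simp only [Set.mem_iUnion] at this
    obtain ⟨z, hz, hxW⟩ := this
    have hzL : z ∈ L := by rw [hL]; exact Finset.mem_toList.mpr hz
    obtain ⟨⟨j, hj⟩, hjz⟩ := List.mem_iff_get.mp hzL
    have hyfj : yf j = z := by
      rw [hyf]
      simp only [List.getD_eq_getElem L d hj]
      rw [← hjz]
      simp [List.get_eq_getElem]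
    have hj1 : (j + 1) - 1 = j := by omega
    have haj : a (j+1) = A z z.2 := by
      rw [haa]
      simp only [hj1, hyfj]
    have hge : f x - ε ≤ a (j+1) x := by
      rw [haj]
      exact hnear z z.2 x ⟨hxW, hx⟩
    have hjk : j < k := hj
    have hmem : (j+1) ∈ Finset.Icc 1 k := by
      simp only [Finset.mem_Icc]; omega
    have hle : a (j+1) x ≤ S := by
      rw [hS]
      exact Finset.le_sup' (fun j => a j x) hmem
    linarith
  rw [abs_le]
  constructor <;> linarith
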